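/- Let A be a commutative ring of characteristic p, let 𝔞 ⊆ A be a nilpotent ideal, Ā = A/𝔞, and let b, b′ ∈ GL_r(A((z))) with reductions b̄, b̄′ ∈ GL_r(Ā((z))). Then reduction modulo 𝔞 gives a bijection from the set { f ∈ GL_r(A((z))) : f·b = b′·σ(f) } onto the set { f̄ ∈ GL_r(Ā((z))) : f̄·b̄ = b̄′·σ(f̄) }. -/

import Mathlib

noncomputable section

open scoped Classical

namespace HVpaper

variable {A : Type*} [CommRing A]

/-- Coefficientwise `q`-th power map on formal Laurent series (the map `σ` for `q ≠ 0`;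
junk value `0` for `q = 0`). -/
def laurentFrob (q : ℕ) (x : LaurentSeries A) : LaurentSeries A :=
  if hq : q = 0 then 0 else x.map (ZeroHom.mk (fun a : A => a ^ q) (zero_pow hq))

/-- Entrywise `σ` on matrices of Laurent series. -/
def matFrob (q : ℕ) {n : Type*} (M : Matrix n n (LaurentSeries A)) :
    Matrix n n (LaurentSeries A) :=
  M.map (laurentFrob q)

/-- `x` lies in `z^n · A⟦z⟧`, i.e. all coefficients below `n` vanish. -/
def InZPow (n : ℤ) (x : LaurentSeries A) : Prop :=
  ∀ m : ℤ, m < n → x.coeff m = 0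

/-- `x` lies in the subring `A⟦z⟧` of `A((z))`. -/
def InPS (x : LaurentSeries A) : Prop :=
  ∀ m : ℤ, m < 0 → x.coeff m = 0

/-- `u` is a unit of the subring `A⟦z⟧` of `A((z))`. -/
def IsPSUnit (u : LaurentSeries A) : Prop :=
  InPS u ∧ ∃ v : LaurentSeries A, InPS v ∧ u * v = 1

/-- The element `z^n` of `A((z))`. -/
def zPow (n : ℤ) : LaurentSeries A :=
  HahnSeries.single n 1

/-- The coefficientwise map on Laurent series induced by a ring homomorphism. -/
def lmap {B : Type*} [CommRing B] (f : A →+* B) (x : LaurentSeries A) : LaurentSeries B :=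
  x.map f

variable {k : Type*} [Field k]

/-- Membership in the subgroup `I_n` of `GL_r(k⟦z⟧)`:  `g` and its inverse have entries in
`k⟦z⟧`, `g ≡ 1 mod z^n` on the diagonal, the entries above the diagonal lie in `z^n k⟦z⟧` and
those below the diagonal lie in `z^(n+1) k⟦z⟧`.  For `n = 0` this is the standard Iwahori
subgroup. -/
def InIwahori {r : ℕ} (n : ℕ) (g : Matrix (Fin r) (Fin r) (LaurentSeries k)) : Prop :=
  (∀ i j, InPS (g i j)) ∧ IsUnit g ∧ (∀ i j, InPS (g⁻¹ i j)) ∧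
  (∀ i : Fin r, InZPow (n : ℤ) (g i i - 1)) ∧
  (∀ i j : Fin r, i < j → InZPow (n : ℤ) (g i j)) ∧
  (∀ i j : Fin r, j < i → InZPow ((n : ℤ) + 1) (g i j))

/-- The sum of the `i` smallest (i.e. last `i`) entries of the nonincreasing tuple `μ`. -/
def lowSum {r : ℕ} (μ : Fin r → ℤ) (i : ℕ) : ℤ :=
  ∑ j : Fin r, if r ≤ (j : ℕ) + i then μ j else 0

/-- The matrix `M` over `A((z))` is bounded by the dominant cocharacter
`μ = (μ 0 ≥ … ≥ μ (r-1))` of `GL_r`: for each `1 ≤ i ≤ r` every `i×i` minor of `M` lies in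
`z^(μ_{r-i+1}+⋯+μ_r)·A⟦z⟧` and `det M = z^(μ_1+⋯+μ_r)` times a unit of `A⟦z⟧`. -/
def BoundedBy {r : ℕ} (μ : Fin r → ℤ) (M : Matrix (Fin r) (Fin r) (LaurentSeries A)) : Prop :=
  (∀ i : Fin r, ∀ ri ci : Fin ((i : ℕ) + 1) → Fin r,
    InZPow (lowSum μ ((i : ℕ) + 1)) ((M.submatrix ri ci).det)) ∧
  (∃ u : LaurentSeries A, IsPSUnit u ∧ M.det = zPow (∑ j, μ j) * u)


/-! ### Auxiliary lemmas -/


section Aux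

variable {B : Type*} [CommRing B]

@[simp] lemma lmap_coeff (f : A →+* B) (x : LaurentSeries A) (m : ℤ) :
    (lmap f x).coeff m = f (x.coeff m) := rfl

@[simp] lemma laurentFrob_coeff {q : ℕ} (hq : q ≠ 0) (x : LaurentSeries A) (m : ℤ) :
    (laurentFrob q x).coeff m = (x.coeff m) ^ q := by
  simp [laurentFrob, hq]

/-- `lmap` of a ring hom, as a ring hom. -/
def lmapRingHom (f : A →+* B) : LaurentSeries A →+* LaurentSeries B where
  toFun := lmap f
  map_one' := by
    have := HahnSeries.map_one (Γ := ℤ) f.toMonoidWithZeroHom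
    ext m
    simpa using congrArg (fun y => HahnSeries.coeff y m) this
  map_mul' x y := by
    have := HahnSeries.map_mul (Γ := ℤ) (f : A →ₙ+* B) (x := x) (y := y)
    ext m
    exact congrArg (fun y => HahnSeries.coeff y m) this
  map_zero' := by ext m; simp
  map_add' x y := by ext m; simp [HahnSeries.coeff_add]

@[simp] lemma lmapRingHom_apply (f : A →+* B) (x : LaurentSeries A) :
    lmapRingHom f x = lmap f x := rfl

/-- Coefficients of a Laurent series all lie in the ideal `J`. -/
def CoeffIn (J : Ideal A) (x : LaurentSeries A) : Prop := ∀ m : ℤ, x.coeff m ∈ J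

lemma CoeffIn.mul {J K : Ideal A} {x y : LaurentSeries A}
    (hx : CoeffIn J x) (hy : CoeffIn K y) : CoeffIn (J * K) (x * y) := by
  intro m
  rw [HahnSeries.coeff_mul]
  exact Ideal.sum_mem _ fun ij _ => Ideal.mul_mem_mul (hx _) (hy _)

lemma CoeffIn.mono {J K : Ideal A} (h : J ≤ K) {x : LaurentSeries A}
    (hx : CoeffIn J x) : CoeffIn K x := fun m => h (hx m)

lemma coeffIn_top (x : LaurentSeries A) : CoeffIn ⊤ x := fun _ => trivial

lemma CoeffIn.pow {J : Ideal A} {x : LaurentSeries A} (hx : CoeffIn J x) (n : ℕ) :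
    CoeffIn (J ^ n) (x ^ n) := by
  induction n with
  | zero => simpa using coeffIn_top 1
  | succ n ih => rw [pow_succ, pow_succ]; exact ih.mul hx

lemma coeffIn_bot_iff {x : LaurentSeries A} : CoeffIn ⊥ x ↔ x = 0 := by
  constructor
  · intro h; ext m; simpa [Ideal.mem_bot] using h m
  · rintro rfl m; simp

/-- Coefficients of all entries of a matrix of Laurent series lie in the ideal `J`. -/
def MCoeffIn (J : Ideal A) {r : ℕ} (M : Matrix (Fin r) (Fin r) (LaurentSeries A)) : Prop :=
  ∀ i j, CoeffIn J (M i j)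

variable {r : ℕ}

lemma sum_coeff {s : Finset (Fin r)} (f : Fin r → LaurentSeries A) (m : ℤ) :
    (∑ k ∈ s, f k).coeff m = ∑ k ∈ s, (f k).coeff m :=
  map_sum (HahnSeries.coeff.addMonoidHom m) f s

lemma MCoeffIn.mul {J K : Ideal A} {M N : Matrix (Fin r) (Fin r) (LaurentSeries A)}
    (hM : MCoeffIn J M) (hN : MCoeffIn K N) : MCoeffIn (J * K) (M * N) := by
  intro i j m
  rw [Matrix.mul_apply, sum_coeff]
  exact Ideal.sum_mem _ fun k _ => (hM i k).mul (hN k j) m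

lemma MCoeffIn.mono {J K : Ideal A} (h : J ≤ K) {M : Matrix (Fin r) (Fin r) (LaurentSeries A)}
    (hM : MCoeffIn J M) : MCoeffIn K M := fun i j => (hM i j).mono h

lemma mCoeffIn_top (M : Matrix (Fin r) (Fin r) (LaurentSeries A)) : MCoeffIn ⊤ M :=
  fun _ _ => coeffIn_top _

lemma MCoeffIn.mul_left {K : Ideal A} {M N : Matrix (Fin r) (Fin r) (LaurentSeries A)}
    (hN : MCoeffIn K N) : MCoeffIn K (M * N) := by
  have := (mCoeffIn_top M).mul hN
  rwa [Ideal.top_mul] at this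

lemma MCoeffIn.mul_right {K : Ideal A} {M N : Matrix (Fin r) (Fin r) (LaurentSeries A)}
    (hM : MCoeffIn K M) : MCoeffIn K (M * N) := by
  have := hM.mul (mCoeffIn_top N)
  rwa [Ideal.mul_top] at this

lemma mCoeffIn_bot_iff {M : Matrix (Fin r) (Fin r) (LaurentSeries A)} :
    MCoeffIn ⊥ M ↔ M = 0 := by
  constructor
  · intro h; ext i j m; simpa [Ideal.mem_bot] using h i j m
  · rintro rfl i j m; simp

/-- Any Laurent series over a quotient lifts coefficientwise. -/
lemma lift_exists (f : A →+* B) (hf : Function.Surjective f) (y : LaurentSeries B) :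
    ∃ x : LaurentSeries A, ∀ m : ℤ, f (x.coeff m) = y.coeff m := by
  classical
  refine ⟨⟨fun m => if h : y.coeff m = 0 then 0 else Classical.choose (hf (y.coeff m)), ?_⟩, ?_⟩
  · apply y.isPWO_support.mono
    intro m hm
    simp only [Function.mem_support] at hm ⊢
    intro hc
    apply hm
    split at hm <;> simp_all
  · intro m
    by_cases h : y.coeff m = 0 <;> simp [h]
    · exact Classical.choose_spec (hf (y.coeff m))

end Aux


set_option maxHeartbeats 1000000 in
/-- **Rigidity of quasi-isogenies** (first part of Proposition 2.11, for `G = GL_r`):  if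
`𝔞 ⊆ A` is a nilpotent ideal of a ring of characteristic `p` and `b, b'` define local
`GL_r`-shtukas over `A`, then reduction modulo `𝔞` is a bijection from the set of
quasi-isogenies `(A((z))^r, b·σ) → (A((z))^r, b'·σ)` onto the set of quasi-isogenies
`(Ā((z))^r, b̄·σ) → (Ā((z))^r, b̄'·σ)`. -/
theorem rigidity_of_quasi_isogenies
    {p : ℕ} (hp : p.Prime) {e : ℕ} (he : 1 ≤ e) {q : ℕ} (hq : q = p ^ e)
    {A : Type*} [CommRing A] [CharP A p]
    (𝔞 : Ideal A) (h𝔞 : IsNilpotent 𝔞)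
    {r : ℕ} (hr : 1 ≤ r)
    (b b' : Matrix (Fin r) (Fin r) (LaurentSeries A)) (hb : IsUnit b) (hb' : IsUnit b') :
    Set.BijOn
      (fun f : Matrix (Fin r) (Fin r) (LaurentSeries A) =>
        f.map (lmap (Ideal.Quotient.mk 𝔞)))
      {f : Matrix (Fin r) (Fin r) (LaurentSeries A) |
        IsUnit f ∧ f * b = b' * matFrob q f}
      {g : Matrix (Fin r) (Fin r) (LaurentSeries (A ⧸ 𝔞)) |
        IsUnit g ∧
          g * b.map (lmap (Ideal.Quotient.mk 𝔞)) =
            b'.map (lmap (Ideal.Quotient.mk 𝔞)) * matFrob q g} := by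
  classical
  haveI : Fact p.Prime := ⟨hp⟩
  subst hq
  have hq0 : p ^ e ≠ 0 := pow_ne_zero _ hp.pos.ne'
  have hq2 : 2 ≤ p ^ e := le_trans hp.two_le (by
    conv_lhs => rw [← pow_one p]
    exact Nat.pow_le_pow_right hp.pos he)
  obtain ⟨N, hN⟩ := h𝔞
  have hbot : 𝔞 ^ (N + 1) = ⊥ := by
    rw [pow_succ, hN]; simpa using bot_mul 𝔞
  set π : A →+* A ⧸ 𝔞 := Ideal.Quotient.mk 𝔞 with hπ
  set Φ : Matrix (Fin r) (Fin r) (LaurentSeries A) →+*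
      Matrix (Fin r) (Fin r) (LaurentSeries (A ⧸ 𝔞)) := (lmapRingHom π).mapMatrix with hΦdef
  have hΦ : ∀ M : Matrix (Fin r) (Fin r) (LaurentSeries A), Φ M = M.map (lmap π) := fun _ => rfl
  set σA : Matrix (Fin r) (Fin r) (LaurentSeries A) →+*
      Matrix (Fin r) (Fin r) (LaurentSeries A) :=
    (lmapRingHom (iterateFrobenius A p e)).mapMatrix with hσAdef
  have hσA : ∀ M : Matrix (Fin r) (Fin r) (LaurentSeries A), matFrob (p ^ e) M = σA M := by
    intro M; ext i j m
    simp [matFrob, Matrix.map_apply, laurentFrob_coeff hq0, hσAdef,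
      RingHom.mapMatrix_apply, iterateFrobenius_def]
  -- reduction commutes with Frobenius
  have hcomm : ∀ M : Matrix (Fin r) (Fin r) (LaurentSeries A),
      Φ (matFrob (p ^ e) M) = matFrob (p ^ e) (Φ M) := by
    intro M; ext i j m
    simp [hΦ, matFrob, Matrix.map_apply, laurentFrob_coeff hq0, map_pow]
  -- kernel description
  have hker : ∀ M : Matrix (Fin r) (Fin r) (LaurentSeries A),
      Φ M = 0 ↔ MCoeffIn 𝔞 M := by
    intro M
    constructor
    · intro h i j m
      have h2 := congrArg (fun X => HahnSeries.coeff (X i j) m) h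
      simp only [hΦ, Matrix.map_apply, lmap_coeff, Matrix.zero_apply,
        HahnSeries.coeff_zero] at h2
      exact Ideal.Quotient.eq_zero_iff_mem.mp h2
    · intro h
      rw [hΦ]; ext i j m
      simp only [Matrix.map_apply, lmap_coeff, Matrix.zero_apply, HahnSeries.coeff_zero]
      exact Ideal.Quotient.eq_zero_iff_mem.mpr (h i j m)
  have hkerdiff : ∀ M N : Matrix (Fin r) (Fin r) (LaurentSeries A),
      Φ M = Φ N ↔ MCoeffIn 𝔞 (M - N) := by
    intro M N
    rw [← sub_eq_zero, ← map_sub Φ, hker]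
  -- unit lifting
  have hunit : ∀ M : Matrix (Fin r) (Fin r) (LaurentSeries A), IsUnit (Φ M) → IsUnit M := by
    intro M h
    rw [Matrix.isUnit_iff_isUnit_det] at h ⊢
    rw [hΦ] at h
    have hdet : (M.map (lmap π)).det = lmapRingHom π M.det := by
      rw [RingHom.map_det]; rfl
    rw [hdet] at h
    obtain ⟨u, hu⟩ := h
    obtain ⟨y, hy⟩ := lift_exists π Ideal.Quotient.mk_surjective (↑u⁻¹)
    have hyeq : lmapRingHom π y = ↑u⁻¹ := by
      ext m; exact hy m
    have h0 : lmapRingHom π (M.det * y - 1) = 0 := by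
      rw [map_sub, map_mul, map_one, hyeq, ← hu]
      simp
    have h1 : CoeffIn 𝔞 (M.det * y - 1) := by
      intro m
      have := congrArg (fun z => HahnSeries.coeff z m) h0
      simp only [lmapRingHom_apply, lmap_coeff, HahnSeries.coeff_zero] at this
      exact Ideal.Quotient.eq_zero_iff_mem.mp this
    have h2 : IsNilpotent (M.det * y - 1) := by
      refine ⟨N + 1, ?_⟩
      have := (h1.pow (N + 1)).mono (le_of_eq hbot)
      exact coeffIn_bot_iff.mp this
    have h3 : IsUnit (M.det * y) := by
      simpa using h2.isUnit_one_add
    exact isUnit_of_mul_isUnit_left h3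
  -- Frobenius raises ideal bounds
  have hfrobIn : ∀ (J : Ideal A) (M : Matrix (Fin r) (Fin r) (LaurentSeries A)),
      MCoeffIn J M → MCoeffIn (J ^ (p ^ e)) (matFrob (p ^ e) M) := by
    intro J M h i j m
    have : (matFrob (p ^ e) M) i j = laurentFrob (p ^ e) (M i j) := rfl
    rw [this, laurentFrob_coeff hq0]
    exact Ideal.pow_mem_pow (h i j m) _
  -- the contraction step
  have hstep : ∀ (n : ℕ) (U V D : Matrix (Fin r) (Fin r) (LaurentSeries A)),
      MCoeffIn (𝔞 ^ (n + 1)) D →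
      MCoeffIn (𝔞 ^ (n + 2)) (U * matFrob (p ^ e) D * V) := by
    intro n U V D hD
    have h1 : MCoeffIn ((𝔞 ^ (n + 1)) ^ (p ^ e)) (matFrob (p ^ e) D) := hfrobIn _ _ hD
    have h2 : (𝔞 ^ (n + 1)) ^ (p ^ e) ≤ 𝔞 ^ (n + 2) := by
      rw [← pow_mul]
      apply Ideal.pow_le_pow_right
      nlinarith
    exact ((h1.mono h2).mul_left (M := U)).mul_right (N := V)
  -- inverse of b
  obtain ⟨bu, hbu⟩ := hb
  set binv : Matrix (Fin r) (Fin r) (LaurentSeries A) := ↑bu⁻¹ with hbinvdef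
  have hbinv1 : b * binv = 1 := by rw [← hbu]; exact bu.mul_inv
  have hbinv2 : binv * b = 1 := by rw [← hbu]; exact bu.inv_mul
  refine ⟨?_, ?_, ?_⟩
  · -- MapsTo
    rintro f ⟨hfu, hfe⟩
    refine ⟨?_, ?_⟩
    · exact hfu.map Φ
    · have := congrArg Φ hfe
      rw [map_mul, map_mul, hcomm] at this
      simpa [hΦ] using this
  · -- InjOn
    rintro f ⟨hfu, hfe⟩ f' ⟨hfu', hfe'⟩ heq
    have heq' : Φ f = Φ f' := by simpa [hΦ] using heq
    have hE1 : MCoeffIn 𝔞 (f - f') := (hkerdiff f f').mp heq'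
    have hsub : matFrob (p ^ e) (f - f') = matFrob (p ^ e) f - matFrob (p ^ e) f' := by
      rw [hσA, hσA, hσA, map_sub]
    have hEb : (f - f') * b = b' * matFrob (p ^ e) (f - f') := by
      rw [hsub, sub_mul, hfe, hfe', mul_sub]
    have hEeq : f - f' = b' * matFrob (p ^ e) (f - f') * binv := by
      calc f - f' = (f - f') * (b * binv) := by rw [hbinv1, mul_one]
        _ = ((f - f') * b) * binv := by rw [mul_assoc]
        _ = b' * matFrob (p ^ e) (f - f') * binv := by rw [hEb]
    have key : ∀ n : ℕ, MCoeffIn (𝔞 ^ (n + 1)) (f - f') := by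
      intro n
      induction n with
      | zero => simpa [pow_one] using hE1
      | succ n ih =>
        rw [hEeq]
        exact hstep n b' binv (f - f') ih
    have hE0 : f - f' = 0 := by
      have h1 := key N
      rw [hbot] at h1
      exact mCoeffIn_bot_iff.mp h1
    exact sub_eq_zero.mp hE0
  · -- SurjOn
    rintro g ⟨hgu, hge⟩
    have hge' : g * Φ b = Φ b' * matFrob (p ^ e) g := by simpa [hΦ] using hge
    -- lift g entrywise
    choose L hL using fun y : LaurentSeries (A ⧸ 𝔞) =>
      lift_exists π Ideal.Quotient.mk_surjective y
    set f0 : Matrix (Fin r) (Fin r) (LaurentSeries A) := Matrix.of fun i j => L (g i j)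
      with hf0def
    have hf0 : Φ f0 = g := by
      rw [hΦ]; ext i j m
      simp only [Matrix.map_apply, lmap_coeff, hf0def, Matrix.of_apply]
      exact hL (g i j) m
    -- iteration
    set F : ℕ → Matrix (Fin r) (Fin r) (LaurentSeries A) :=
      fun n => Nat.rec f0 (fun _ M => b' * matFrob (p ^ e) M * binv) n with hFdef
    have hFs : ∀ n, F (n + 1) = b' * matFrob (p ^ e) (F n) * binv := fun n => rfl
    have hred : ∀ n, Φ (F n) = g := by
      intro n
      induction n with
      | zero => exact hf0
      | succ n ih =>
        rw [hFs, map_mul, map_mul, hcomm, ih, ← hge', mul_assoc, ← map_mul, hbinv1,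
          map_one, mul_one]
    have hdrop : ∀ n, MCoeffIn (𝔞 ^ (n + 1)) (F (n + 1) - F n) := by
      intro n
      induction n with
      | zero =>
        rw [pow_one]
        exact (hkerdiff _ _).mp ((hred 1).trans (hred 0).symm)
      | succ n ih =>
        have hsub : matFrob (p ^ e) (F (n + 1) - F n)
            = matFrob (p ^ e) (F (n + 1)) - matFrob (p ^ e) (F n) := by
          rw [hσA, hσA, hσA, map_sub]
        have hdiff : F (n + 2) - F (n + 1)
            = b' * matFrob (p ^ e) (F (n + 1) - F n) * binv := by
          rw [hsub, mul_sub, sub_mul, ← hFs (n + 1), ← hFs n]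
        rw [hdiff]
        exact hstep n b' binv _ ih
    have hstop : F (N + 1) = F N := by
      have h1 := hdrop N
      rw [hbot] at h1
      exact sub_eq_zero.mp (mCoeffIn_bot_iff.mp h1)
    refine ⟨F N, ⟨?_, ?_⟩, by simpa [hΦ] using hred N⟩
    · exact hunit (F N) (by rw [hred N]; exact hgu)
    · have hfix : F N = b' * matFrob (p ^ e) (F N) * binv := by
        have h2 := hFs N
        rw [hstop] at h2
        exact h2
      calc F N * b = (b' * matFrob (p ^ e) (F N) * binv) * b := by rw [← hfix]
        _ = b' * matFrob (p ^ e) (F N) * (binv * b) := by rw [mul_assoc]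
        _ = b' * matFrob (p ^ e) (F N) := by rw [hbinv2, mul_one]

end HVpaper
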